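/- Let k ≥ 2 be an integer and G a split graph with split partition (X, Y), where X is an independent set and Y is a clique. If β^k(G) ≥ 1, then |Y| ≥ max{k, |X| + k − 1}. -/

import Mathlib

open Finset
open scoped Classical

variable {V : Type*}

/-- The k-th neighborhood: vertices adjacent to at least `k` vertices of `S`. -/
noncomputable def kNbhd [Fintype V] (G : SimpleGraph V) (k : ℕ) (S : Finset V) : Finset V :=
  Finset.univ.filter fun v => k ≤ (S.filter fun u => G.Adj v u).card

/-- The k-th binding number. -/
noncomputable def bindingNum [Fintype V] (G : SimpleGraph V) (k : ℕ) : ℝ :=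
  if h : (Finset.univ.filter fun S : Finset V =>
      k ≤ S.card ∧ kNbhd G k S ≠ Finset.univ).Nonempty then
    (Finset.univ.filter fun S : Finset V =>
      k ≤ S.card ∧ kNbhd G k S ≠ Finset.univ).inf' h
      fun S => ((kNbhd G k S).card : ℝ) / (S.card : ℝ)
  else 0

theorem stmt_19 [Fintype V] (k : ℕ) (hk : 2 ≤ k) (G : SimpleGraph V)
    (X Y : Finset V) (hdisj : Disjoint X Y) (hunion : X ∪ Y = Finset.univ)
    (hX : ∀ u ∈ X, ∀ v ∈ X, ¬ G.Adj u v)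
    (hY : ∀ u ∈ Y, ∀ v ∈ Y, u ≠ v → G.Adj u v)
    (hβ : 1 ≤ bindingNum G k) :
    max k (X.card + k - 1) ≤ Y.card := by
  classical
  -- The filter set is nonempty
  have hne : (Finset.univ.filter fun S : Finset V =>
      k ≤ S.card ∧ kNbhd G k S ≠ Finset.univ).Nonempty := by
    by_contra h
    rw [bindingNum, dif_neg h] at hβ
    norm_num at hβ
  -- key consequence of binding number ≥ 1
  have key : ∀ S : Finset V, k ≤ S.card → kNbhd G k S ≠ Finset.univ →
      S.card ≤ (kNbhd G k S).card := by
    intro S h1 h2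
    have hmem : S ∈ (Finset.univ.filter fun S : Finset V =>
        k ≤ S.card ∧ kNbhd G k S ≠ Finset.univ) :=
      Finset.mem_filter.mpr ⟨Finset.mem_univ S, h1, h2⟩
    have hle := Finset.inf'_le
      (f := fun S : Finset V => ((kNbhd G k S).card : ℝ) / (S.card : ℝ)) hmem
    rw [bindingNum, dif_pos hne] at hβ
    have h3 : (1:ℝ) ≤ ((kNbhd G k S).card : ℝ) / (S.card : ℝ) := le_trans hβ hle
    have hS0 : 0 < (S.card : ℝ) := by
      have : 0 < S.card := by omega
      exact_mod_cast this
    have := (one_le_div hS0).mp h3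
    exact_mod_cast this
  -- there is some S with k ≤ |S|, so k ≤ |univ|
  obtain ⟨S0, hS0⟩ := hne
  have hS0' := (Finset.mem_filter.mp hS0).2.1
  have hcard : k ≤ (Finset.univ : Finset V).card :=
    le_trans hS0' (Finset.card_le_univ S0)
  -- Claim 1 : k ≤ Y.card
  have hYk : k ≤ Y.card := by
    by_contra hYk
    push_neg at hYk
    rcases X.eq_empty_or_nonempty with hXe | ⟨x, hx⟩
    · rw [hXe, Finset.empty_union] at hunion
      rw [hunion] at hYk
      omega
    · have hxnot : x ∉ kNbhd G k (Finset.univ : Finset V) := by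
        simp only [kNbhd, Finset.mem_filter, Finset.mem_univ, true_and]
        push_neg
        have hsub : (Finset.univ.filter fun u => G.Adj x u) ⊆ Y := by
          intro u hu
          simp only [Finset.mem_filter] at hu
          have : u ∈ X ∪ Y := hunion ▸ Finset.mem_univ u
          rcases Finset.mem_union.mp this with h | h
          · exact absurd hu.2 (hX x hx u h)
          · exact h
        calc (Finset.univ.filter fun u => G.Adj x u).card ≤ Y.card :=
              Finset.card_le_card hsub
          _ < k := hYk
      have hneq : kNbhd G k (Finset.univ : Finset V) ≠ Finset.univ := by
        intro h; rw [h] at hxnot; exact hxnot (Finset.mem_univ x)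
      have := key Finset.univ hcard hneq
      have hlt : (kNbhd G k (Finset.univ : Finset V)).card <
          (Finset.univ : Finset V).card :=
        Finset.card_lt_card ⟨Finset.subset_univ _, fun h => hxnot (h (Finset.mem_univ x))⟩
      omega
  -- Claim 2 : X.card + k - 1 ≤ Y.card (if X nonempty)
  rcases X.eq_empty_or_nonempty with hXe | ⟨x, hx⟩
  · simp [hXe]; omega
  · obtain ⟨T, hTY, hTcard⟩ := Finset.exists_subset_card_eq (s := Y) (n := k - 1) (by omega)
    have hdisjXT : Disjoint X T := hdisj.mono_right hTY
    set S := X ∪ T with hS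
    have hScard : S.card = X.card + (k - 1) := by
      rw [hS, Finset.card_union_of_disjoint hdisjXT, hTcard]
    have hXpos : 0 < X.card := Finset.card_pos.mpr ⟨x, hx⟩
    have hSk : k ≤ S.card := by omega
    -- any vertex of X is not in kNbhd G k S
    have hXnot : ∀ v ∈ X, v ∉ kNbhd G k S := by
      intro v hv
      simp only [kNbhd, Finset.mem_filter, Finset.mem_univ, true_and]
      push_neg
      have hsub : (S.filter fun u => G.Adj v u) ⊆ T := by
        intro u hu
        simp only [Finset.mem_filter, hS, Finset.mem_union] at hu
        rcases hu.1 with h | h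
        · exact absurd hu.2 (hX v hv u h)
        · exact h
      calc (S.filter fun u => G.Adj v u).card ≤ T.card := Finset.card_le_card hsub
        _ = k - 1 := hTcard
        _ < k := by omega
    have hneq : kNbhd G k S ≠ Finset.univ := by
      intro h; exact hXnot x hx (h.symm ▸ Finset.mem_univ x)
    have hkey := key S hSk hneq
    have hΛY : kNbhd G k S ⊆ Y := by
      intro v hv
      have : v ∈ X ∪ Y := hunion ▸ Finset.mem_univ v
      rcases Finset.mem_union.mp this with h | h
      · exact absurd hv (hXnot v h)
      · exact h
    have : (kNbhd G k S).card ≤ Y.card := Finset.card_le_card hΛY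
    omega
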